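/- (Shephard) Every zonotope is equiprojective: if Z = Σ_{i=1}^m [−η_i, η_i] ⊆ ℝ^d is a Minkowski sum of segments whose generators η_1, …, η_m span ℝ^d, then for all unit vectors u, u′ not parallel to any proper face of Z, the orthogonal projections of Z onto u^⊥ and (u′)^⊥ have the same number of k-dimensional faces for every k. -/

import Mathlib

/-!
Formalization of statements from "Projection Volumes of Hyperplane Arrangements"
by Klivans and Swartz.
-/

open scoped RealInnerProductSpace Pointwise
open MeasureTheory Metric Set

noncomputable section

attribute [local instance] Classical.decEq Classical.propDecidable

/-- Shorthand for the ambient Euclidean space `ℝ^d`. -/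
abbrev Euc (d : ℕ) := EuclideanSpace ℝ (Fin d)

variable {E : Type*} [NormedAddCommGroup E] [InnerProductSpace ℝ E] [FiniteDimensional ℝ E]
  [MeasurableSpace E] [BorelSpace E]

/-- A (linear) hyperplane: the orthogonal complement of a nonzero vector,
i.e. a codimension-one linear subspace. -/
def IsLinearHyperplane (H : Submodule ℝ E) : Prop :=
  ∃ η : E, η ≠ 0 ∧ H = (Submodule.span ℝ {η})ᗮ

/-- The intersection poset `L(𝒜)`: all intersections of subsets of `𝒜`
(the empty intersection being the whole space `⊤`), as a finset of subspaces.
It is ordered by *reverse* inclusion: `x ⊑ y` in `L(𝒜)` iff `y ≤ x` as submodules;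
the minimal element `ℝ^d` is `⊤`. -/
def interPoset (A : Finset (Submodule ℝ E)) : Finset (Submodule ℝ E) :=
  A.powerset.image fun S => S.inf id

/-- The complement of the union of the hyperplanes of `𝒜`. -/
def hypComplement (A : Finset (Submodule ℝ E)) : Set E :=
  {z | ∀ H ∈ A, z ∉ H}

/-- A region of `𝒜`: a connected component of the complement of the hyperplanes. -/
def IsRegion (A : Finset (Submodule ℝ E)) (C : Set E) : Prop :=
  ∃ z ∈ hypComplement A, C = connectedComponentIn (hypComplement A) z

/-- `p` is the nearest point of `C` to `z` (i.e. `p = π_C(z)`, the orthogonal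
projection of `z` onto `C`; it is unique when `C` is nonempty, closed and convex). -/
def IsNearestPt (C : Set E) (z p : E) : Prop :=
  p ∈ C ∧ ∀ q ∈ C, dist z p ≤ dist z q

/-- A face of a convex set `C`: a nonempty exposed face (`C` itself included). -/
def IsFaceOf (C F : Set E) : Prop :=
  F.Nonempty ∧ IsExposed ℝ C F

/-- The dimension of a set: the dimension of the direction space of its affine span. -/
def sdim (F : Set E) : ℕ := Module.finrank ℝ (vectorSpan ℝ F)

/-- `X_F`: the set of points `z` whose orthogonal projection onto `C` lies in the
relative interior (= intrinsic interior) of the face `F`. -/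
def projRegion (C F : Set E) : Set E :=
  {z | ∃ p, IsNearestPt C z p ∧ p ∈ intrinsicInterior ℝ F}

/-- `ν_C(F)`: the fraction of the volume of the unit ball occupied by `X_F`. -/
def nuF (C F : Set E) : ℝ :=
  (volume (projRegion C F ∩ closedBall (0 : E) 1)).toReal /
    (volume (closedBall (0 : E) 1)).toReal

/-- `ν_k(C)`: the sum of `ν_C(F)` over all `k`-dimensional faces `F` of `C`. -/
def nuK (C : Set E) (k : ℕ) : ℝ :=
  ∑ᶠ F ∈ {F | IsFaceOf C F ∧ sdim F = k}, nuF C F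


/-- The orthogonal projection of `ℝ^d` onto the hyperplane `u^⊥` (for a unit vector `u`). -/
def projPerp (u x : E) : E := x - ⟪u, x⟫ • u

/-- A `d`-dimensional polytope `P ⊆ ℝ^d` is equiprojective if for all unit vectors
`u, u'` not parallel to any proper face of `P` (i.e. not lying in the direction space
of the affine span of any proper face), the orthogonal projections of `P` onto `u^⊥`
and `(u')^⊥` have the same number of `k`-dimensional faces for every `k`. -/
def Equiprojective (P : Set E) : Prop :=
  ∀ u u' : E, ‖u‖ = 1 → ‖u'‖ = 1 →
    (∀ F, IsFaceOf P F → F ≠ P → u ∉ vectorSpan ℝ F) →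
    (∀ F, IsFaceOf P F → F ≠ P → u' ∉ vectorSpan ℝ F) →
    ∀ k : ℕ,
      {F | IsFaceOf (projPerp u '' P) F ∧ sdim F = k}.ncard
        = {F | IsFaceOf (projPerp u' '' P) F ∧ sdim F = k}.ncard

namespace ZProof

variable {E F : Type*} [NormedAddCommGroup E] [InnerProductSpace ℝ E] [FiniteDimensional ℝ E]
  [NormedAddCommGroup F] [InnerProductSpace ℝ F] [FiniteDimensional ℝ F]

/-- Sign vector of `c` against the family `W`. -/
def sgnv {m : ℕ} (W : Fin m → E) (c : E) : Fin m → SignType :=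
  fun i => SignType.sign ⟪c, W i⟫

/-- The set of achievable sign vectors (covectors) of the family `W`. -/
def SV {m : ℕ} (W : Fin m → E) : Set (Fin m → SignType) := Set.range (sgnv W)

/-- Zero set of a sign vector. -/
def zsgn {m : ℕ} (s : Fin m → SignType) : Set (Fin m) := {i | s i = 0}

/-- Rank of a subfamily. -/
def rk {m : ℕ} (W : Fin m → E) (S : Set (Fin m)) : ℕ :=
  Module.finrank ℝ (Submodule.span ℝ (W '' S))

/-- Topes : maximal covectors. -/
def Topes {m : ℕ} (W : Fin m → E) : Set (Fin m → SignType) :=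
  {s | s ∈ SV W ∧ zsgn s = {i | W i = 0}}

lemma rk_mono {m : ℕ} (W : Fin m → E) {S T : Set (Fin m)} (h : S ⊆ T) :
    rk W S ≤ rk W T :=
  Submodule.finrank_mono (Submodule.span_mono (Set.image_mono h))

lemma rk_singleton {m : ℕ} (W : Fin m → E) (i : Fin m) :
    rk W {i} = if W i = 0 then 0 else 1 := by
  unfold rk
  rw [Set.image_singleton]
  split_ifs with h
  · rw [h, Submodule.span_zero_singleton, finrank_bot]
  · exact finrank_span_singleton h

lemma rk_singleton_eq_zero {m : ℕ} (W : Fin m → E) (i : Fin m) :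
    rk W {i} = 0 ↔ W i = 0 := by
  rw [rk_singleton]; split_ifs with h <;> simp [h]

lemma sign_add_of_abs_lt {a b : ℝ} (h : |b| < |a|) :
    SignType.sign (a + b) = SignType.sign a := by
  rcases lt_trichotomy a 0 with ha | ha | ha
  · have hb : b < -a := lt_of_le_of_lt (le_abs_self b) (by rwa [abs_of_neg ha] at h)
    rw [sign_neg ha, sign_neg (by linarith)]
  · simp [ha, abs_zero] at h; linarith [abs_nonneg b]
  · have hb : -a < b := by
      have := neg_abs_le b
      have h' : |b| < a := by rwa [abs_of_pos ha] at h
      linarith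
    rw [sign_pos ha, sign_pos (by linarith)]

/-- Perturbation: small perturbations preserve nonzero signs. -/
lemma perturb {k : ℕ} (v : Fin k → E) (c z : E) :
    ∃ δ : ℝ, 0 < δ ∧ ∀ ε : ℝ, |ε| ≤ δ → ∀ j, ⟪c, v j⟫ ≠ 0 →
      SignType.sign ⟪c + ε • z, v j⟫ = SignType.sign ⟪c, v j⟫ := by
  classical
  set T : Finset (Fin k) := Finset.univ.filter (fun j => ⟪c, v j⟫ ≠ 0) with hT
  set f : Fin k → ℝ := fun j => |⟪c, v j⟫| / (|⟪z, v j⟫| + 1) with hf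
  set s : Finset ℝ := insert (1:ℝ) (T.image f) with hs
  have hsne : s.Nonempty := ⟨1, Finset.mem_insert_self _ _⟩
  refine ⟨s.min' hsne, ?_, ?_⟩
  · rw [show (0:ℝ) = 0 from rfl, Finset.lt_min'_iff]
    intro y hy
    rcases Finset.mem_insert.mp hy with rfl | hy
    · norm_num
    · obtain ⟨j, hj, rfl⟩ := Finset.mem_image.mp hy
      have hj' : ⟪c, v j⟫ ≠ 0 := (Finset.mem_filter.mp hj).2
      apply div_pos (abs_pos.mpr hj')
      positivity
  · intro ε hε j hj
    have hjT : j ∈ T := Finset.mem_filter.mpr ⟨Finset.mem_univ j, hj⟩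
    have h1 : s.min' hsne ≤ f j :=
      Finset.min'_le _ _ (Finset.mem_insert_of_mem (Finset.mem_image_of_mem f hjT))
    have key : |ε * ⟪z, v j⟫| < |⟪c, v j⟫| := by
      rw [abs_mul]
      calc |ε| * |⟪z, v j⟫| ≤ f j * |⟪z, v j⟫| := by
            apply mul_le_mul_of_nonneg_right (le_trans hε h1) (abs_nonneg _)
        _ < |⟪c, v j⟫| := by
            rw [hf]
            have hz : (0:ℝ) < |⟪z, v j⟫| + 1 := by positivity
            rw [div_mul_eq_mul_div, div_lt_iff₀ hz]
            have : |⟪z, v j⟫| < |⟪z, v j⟫| + 1 := by linarith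
            have hc : (0:ℝ) < |⟪c, v j⟫| := abs_pos.mpr hj
            nlinarith
    rw [inner_add_left, real_inner_smul_left]
    exact sign_add_of_abs_lt key

/-- Explicit projection along `w`. -/
def prjL (w : E) : E →ₗ[ℝ] E where
  toFun x := x - (⟪w, x⟫ / ⟪w, w⟫) • w
  map_add' x y := by
    simp only [inner_add_right, add_div, add_smul]; abel
  map_smul' r x := by
    simp only [real_inner_smul_right, RingHom.id_apply, smul_sub, smul_smul, mul_div_assoc]

lemma prjL_apply (w x : E) : prjL w x = x - (⟪w, x⟫ / ⟪w, w⟫) • w := rfl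

lemma prjL_self (w : E) (hw : w ≠ 0) : prjL w w = 0 := by
  rw [prjL_apply, div_self (inner_self_ne_zero.mpr hw), one_smul, sub_self]

lemma inner_prjL (w c x : E) (hc : ⟪c, w⟫ = 0) : ⟪c, prjL w x⟫ = ⟪c, x⟫ := by
  rw [prjL_apply, inner_sub_right, real_inner_smul_right, hc, mul_zero, sub_zero]

lemma prjL_symm (w c x : E) : ⟪prjL w c, x⟫ = ⟪c, prjL w x⟫ := by
  rw [prjL_apply, prjL_apply, inner_sub_left, inner_sub_right, real_inner_smul_left,
    real_inner_smul_right, real_inner_comm c w]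
  ring

lemma inner_prjL_self (w x : E) (hw : w ≠ 0) : ⟪prjL w x, w⟫ = 0 := by
  rw [prjL_apply, inner_sub_left, real_inner_smul_left,
    div_mul_cancel₀ _ (inner_self_ne_zero.mpr hw), real_inner_comm, sub_self]

lemma ker_prjL (w : E) (hw : w ≠ 0) :
    LinearMap.ker (prjL w) = Submodule.span ℝ {w} := by
  apply le_antisymm
  · intro x hx
    rw [LinearMap.mem_ker, prjL_apply, sub_eq_zero] at hx
    rw [hx]
    exact Submodule.smul_mem _ _ (Submodule.mem_span_singleton_self w)
  · rw [Submodule.span_le, Set.singleton_subset_iff]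
    exact LinearMap.mem_ker.mpr (prjL_self w hw)

/-- Rank-nullity for mapped submodules. -/
lemma finrank_map_add_inf_ker (f : E →ₗ[ℝ] E) (p : Submodule ℝ E) :
    Module.finrank ℝ (p.map f) + Module.finrank ℝ ↥(p ⊓ LinearMap.ker f) =
      Module.finrank ℝ p := by
  have h := LinearMap.finrank_range_add_finrank_ker (f.domRestrict p)
  rw [LinearMap.range_domRestrict] at h
  have h2 : LinearMap.ker (f.domRestrict p) = (LinearMap.ker f).comap p.subtype :=
    LinearMap.ker_domRestrict p f
  have h3 : (LinearMap.ker f).comap p.subtype = (LinearMap.ker f ⊓ p).comap p.subtype := by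
    ext x
    simp only [Submodule.mem_comap, Submodule.mem_inf]
    exact ⟨fun hx => ⟨hx, x.2⟩, fun hx => hx.1⟩
  have h4 : Module.finrank ℝ ↥(LinearMap.ker (f.domRestrict p)) =
      Module.finrank ℝ ↥(LinearMap.ker f ⊓ p) := by
    rw [h2, h3]
    exact (Submodule.comapSubtypeEquivOfLe inf_le_right).finrank_eq
  rw [h4] at h
  rw [inf_comm] at h
  exact h


/-- Key rank identity for projections. -/
lemma finrank_span_image_proj (f : E →ₗ[ℝ] E) (K : Submodule ℝ E)
    (hker : LinearMap.ker f = K) (A : Set E) :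
    Module.finrank ℝ (Submodule.span ℝ (f '' A)) + Module.finrank ℝ K =
      Module.finrank ℝ ↥(Submodule.span ℝ A ⊔ K) := by
  have h1 := finrank_map_add_inf_ker f (Submodule.span ℝ A)
  rw [hker] at h1
  have h2 := Submodule.finrank_sup_add_finrank_inf_eq (Submodule.span ℝ A) K
  rw [Submodule.span_image]
  omega

/-- Orthogonal-complement projection onto `Kᗮ`. -/
def pjK (K : Submodule ℝ E) : E →ₗ[ℝ] E :=
  LinearMap.id - K.subtype ∘ₗ (K.orthogonalProjectionOnto).toLinearMap

lemma pjK_apply (K : Submodule ℝ E) (x : E) :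
    pjK K x = x - (K.orthogonalProjectionOnto x : E) := rfl

lemma ker_pjK (K : Submodule ℝ E) : LinearMap.ker (pjK K) = K := by
  ext x
  rw [LinearMap.mem_ker, pjK_apply, sub_eq_zero, eq_comm]
  exact Submodule.starProjection_eq_self_iff

lemma inner_pjK (K : Submodule ℝ E) (c x : E) (hc : c ∈ Kᗮ) :
    ⟪c, pjK K x⟫ = ⟪c, x⟫ := by
  rw [pjK_apply, inner_sub_right,
    Submodule.inner_left_of_mem_orthogonal (K.orthogonalProjectionOnto x).2 hc, sub_zero]

lemma pjK_symm (K : Submodule ℝ E) (c x : E) : ⟪pjK K c, x⟫ = ⟪c, pjK K x⟫ := by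
  rw [pjK_apply, pjK_apply, inner_sub_left, inner_sub_right,
    ← Submodule.starProjection_apply, ← Submodule.starProjection_apply,
    Submodule.inner_starProjection_left_eq_right]

lemma pjK_mem_orthogonal (K : Submodule ℝ E) (c : E) : pjK K c ∈ Kᗮ := by
  rw [pjK_apply]
  exact Submodule.sub_starProjection_mem_orthogonal c

lemma pjK_eq_zero_iff (K : Submodule ℝ E) (x : E) : pjK K x = 0 ↔ x ∈ K := by
  rw [← LinearMap.mem_ker, ker_pjK]

lemma real_inner_self_pos' (x : E) (h : x ≠ 0) : 0 < ⟪x, x⟫ :=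
  lt_of_le_of_ne real_inner_self_nonneg (Ne.symm (inner_self_ne_zero.mpr h))

lemma sign_ne_zero_cases (s : SignType) (h : s ≠ 0) : s = 1 ∨ s = -1 := by
  cases s <;> simp_all

lemma sign_combo {a b x y : ℝ} (ha : 0 < a) (hb : 0 < b)
    (h : SignType.sign x = SignType.sign y) :
    SignType.sign (a * x + b * y) = SignType.sign x := by
  rcases lt_trichotomy x 0 with hx | hx | hx
  · have hy : y < 0 := by
      by_contra hy
      push_neg at hy
      rcases eq_or_lt_of_le hy with hy' | hy'
      · rw [sign_neg hx, ← hy', sign_zero] at h; exact absurd h (by decide)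
      · rw [sign_neg hx, sign_pos hy'] at h; exact absurd h (by decide)
    rw [sign_neg hx, sign_neg (by nlinarith)]
  · subst hx
    have hy : y = 0 := sign_eq_zero_iff.mp (by rw [← h, sign_zero])
    subst hy
    simp
  · have hy : 0 < y := by
      by_contra hy
      push_neg at hy
      rcases eq_or_lt_of_le hy with hy' | hy'
      · rw [sign_pos hx, hy', sign_zero] at h; exact absurd h (by decide)
      · rw [sign_pos hx, sign_neg hy'] at h; exact absurd h (by decide)
    rw [sign_pos hx, sign_pos (by nlinarith)]

section ThmA

variable {n : ℕ}

lemma restrict_mem_topes {W : Fin (n+1) → E} {s : Fin (n+1) → SignType}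
    (hs : s ∈ Topes W) : s ∘ Fin.castSucc ∈ Topes (W ∘ Fin.castSucc) := by
  obtain ⟨⟨c, rfl⟩, hz⟩ := hs
  refine ⟨⟨c, rfl⟩, ?_⟩
  ext j
  have := Set.ext_iff.mp hz (Fin.castSucc j)
  simpa [zsgn, sgnv] using this

lemma topes_ncard_del (W : Fin (n+1) → E)
    (φ : (Fin n → SignType) → SignType)
    (hφ : ∀ c : E, sgnv W c (Fin.last n) = φ (sgnv (W ∘ Fin.castSucc) c))
    (hlast : ∀ c : E, sgnv (W ∘ Fin.castSucc) c ∈ Topes (W ∘ Fin.castSucc) →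
      (sgnv W c (Fin.last n) = 0 ↔ W (Fin.last n) = 0)) :
    (Topes W).ncard = (Topes (W ∘ Fin.castSucc)).ncard := by
  have himg : (fun s : Fin (n+1) → SignType => s ∘ Fin.castSucc) '' Topes W
      = Topes (W ∘ Fin.castSucc) := by
    apply Set.Subset.antisymm
    · rintro _ ⟨s, hs, rfl⟩; exact restrict_mem_topes hs
    · rintro s' ⟨⟨c, rfl⟩, hz⟩
      refine ⟨sgnv W c, ⟨⟨c, rfl⟩, ?_⟩, rfl⟩
      ext i
      refine Fin.lastCases ?_ ?_ i
      · simpa [zsgn] using hlast c ⟨⟨c, rfl⟩, hz⟩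
      · intro j
        have := Set.ext_iff.mp hz j
        simpa [zsgn, sgnv] using this
  have hinj : Set.InjOn (fun s : Fin (n+1) → SignType => s ∘ Fin.castSucc) (Topes W) := by
    intro s hs t ht hst
    obtain ⟨⟨c, hc⟩, -⟩ := hs
    obtain ⟨⟨c', hc'⟩, -⟩ := ht
    have hst' : s ∘ Fin.castSucc = t ∘ Fin.castSucc := hst
    funext i
    refine Fin.lastCases ?_ ?_ i
    · have h1 : s (Fin.last n) = φ (s ∘ Fin.castSucc) := by rw [← hc]; exact hφ c
      have h2 : t (Fin.last n) = φ (t ∘ Fin.castSucc) := by rw [← hc']; exact hφ c'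
      rw [h1, h2, hst']
    · intro j; exact congrFun hst' j
  rw [← himg, Set.ncard_image_of_injOn hinj]

lemma topes_case_zero (W : Fin (n+1) → E) (h0 : W (Fin.last n) = 0) :
    (Topes W).ncard = (Topes (W ∘ Fin.castSucc)).ncard := by
  apply topes_ncard_del W (fun _ => 0)
  · intro c; simp [sgnv, h0]
  · intro c _; simp [sgnv, h0]

lemma topes_case_parallel (W : Fin (n+1) → E) (j₀ : Fin n) (lam : ℝ)
    (hj : W (Fin.castSucc j₀) ≠ 0) (hlam : lam ≠ 0)
    (hpar : W (Fin.last n) = lam • W (Fin.castSucc j₀)) :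
    (Topes W).ncard = (Topes (W ∘ Fin.castSucc)).ncard := by
  apply topes_ncard_del W (fun t => SignType.sign lam * t j₀)
  · intro c
    simp only [sgnv, hpar, real_inner_smul_right, Function.comp_apply]
    rw [sign_mul]
  · intro c hc
    have hne : sgnv (W ∘ Fin.castSucc) c j₀ ≠ 0 := by
      intro hzero
      have := Set.ext_iff.mp hc.2 j₀
      simp only [zsgn, Set.mem_setOf_eq, Function.comp_apply] at this
      exact hj (this.mp hzero)
    constructor
    · intro hz
      exfalso
      have hval : sgnv W c (Fin.last n) = SignType.sign lam * sgnv (W ∘ Fin.castSucc) c j₀ := by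
        simp only [sgnv, hpar, real_inner_smul_right, Function.comp_apply]
        rw [sign_mul]
      rw [hval] at hz
      rcases mul_eq_zero.mp hz with h | h
      · exact (by rwa [ne_eq, sign_eq_zero_iff] : SignType.sign lam ≠ 0) h
      · exact hne h
    · intro hz
      exact absurd hz (by rw [hpar]; exact smul_ne_zero hlam hj)

lemma mem_topes_of (W : Fin (n+1) → E) (c : E)
    (hrest : sgnv (W ∘ Fin.castSucc) c ∈ Topes (W ∘ Fin.castSucc))
    (h0 : W (Fin.last n) ≠ 0) (hl : ⟪c, W (Fin.last n)⟫ ≠ 0) :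
    sgnv W c ∈ Topes W := by
  refine ⟨⟨c, rfl⟩, ?_⟩
  ext i
  refine Fin.lastCases ?_ ?_ i
  · simp only [zsgn, Set.mem_setOf_eq, sgnv]
    rw [sign_eq_zero_iff]
    exact ⟨fun hz => absurd hz hl, fun hz => absurd hz h0⟩
  · intro j
    have := Set.ext_iff.mp hrest.2 j
    simpa [zsgn, sgnv] using this

lemma topes_case_general (W : Fin (n+1) → E)
    (h0 : W (Fin.last n) ≠ 0)
    (hg : ∀ j : Fin n, (W ∘ Fin.castSucc) j ∈ Submodule.span ℝ {W (Fin.last n)} →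
      (W ∘ Fin.castSucc) j = 0) :
    (Topes W).ncard = (Topes (W ∘ Fin.castSucc)).ncard
      + (Topes (fun j => prjL (W (Fin.last n)) ((W ∘ Fin.castSucc) j))).ncard := by
  classical
  set wl := W (Fin.last n) with hwl
  set D : Fin n → E := W ∘ Fin.castSucc with hD
  set C : Fin n → E := fun j => prjL wl (D j) with hC
  set ρ : (Fin (n+1) → SignType) → (Fin n → SignType) := fun s => s ∘ Fin.castSucc with hρ
  set A := {s : Fin (n+1) → SignType | s ∈ Topes W ∧ s (Fin.last n) = 1} with hA
  set B := {s : Fin (n+1) → SignType | s ∈ Topes W ∧ s (Fin.last n) = -1} with hB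
  have hQpos : 0 < ⟪wl, wl⟫ := real_inner_self_pos' wl h0
  have hlps : ∀ j, (C j = 0 ↔ D j = 0) := by
    intro j
    constructor
    · intro hc
      apply hg
      have hker : D j ∈ LinearMap.ker (prjL wl) := LinearMap.mem_ker.mpr hc
      rwa [ker_prjL wl h0] at hker
    · intro hd
      rw [hC]
      simp only [hd, map_zero]
  have hTunion : Topes W = A ∪ B := by
    apply Set.Subset.antisymm
    · intro s hs
      have hlastne : s (Fin.last n) ≠ 0 := by
        intro hz
        have hiff := Set.ext_iff.mp hs.2 (Fin.last n)
        simp only [zsgn, Set.mem_setOf_eq] at hiff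
        exact h0 (hiff.mp hz)
      rcases sign_ne_zero_cases _ hlastne with h | h
      · exact Or.inl ⟨hs, h⟩
      · exact Or.inr ⟨hs, h⟩
    · rintro s (⟨hs, -⟩ | ⟨hs, -⟩) <;> exact hs
  have hdisj : Disjoint A B := by
    rw [Set.disjoint_left]
    rintro s ⟨-, h1⟩ ⟨-, h2⟩
    rw [h1] at h2
    exact absurd h2 (by decide)
  have hinjA : Set.InjOn ρ A := by
    rintro s ⟨-, hs1⟩ t ⟨-, ht1⟩ hst
    have hst' : s ∘ Fin.castSucc = t ∘ Fin.castSucc := hst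
    funext i
    refine Fin.lastCases ?_ ?_ i
    · rw [hs1, ht1]
    · intro j; exact congrFun hst' j
  have hinjB : Set.InjOn ρ B := by
    rintro s ⟨-, hs1⟩ t ⟨-, ht1⟩ hst
    have hst' : s ∘ Fin.castSucc = t ∘ Fin.castSucc := hst
    funext i
    refine Fin.lastCases ?_ ?_ i
    · rw [hs1, ht1]
    · intro j; exact congrFun hst' j
  have hmemAB : ∀ c' : E, sgnv D c' ∈ Topes D → ⟪c', wl⟫ ≠ 0 →
      sgnv D c' ∈ ρ '' A ∪ ρ '' B := by
    intro c' hrest hcl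
    have htope : sgnv W c' ∈ Topes W := mem_topes_of W c' hrest h0 hcl
    have hrho : ρ (sgnv W c') = sgnv D c' := rfl
    have hlastval : sgnv W c' (Fin.last n) = SignType.sign ⟪c', wl⟫ := rfl
    rcases sign_ne_zero_cases (SignType.sign ⟪c', wl⟫)
        (by rwa [ne_eq, sign_eq_zero_iff]) with h | h
    · exact Or.inl ⟨sgnv W c', ⟨htope, by rw [hlastval, h]⟩, hrho⟩
    · exact Or.inr ⟨sgnv W c', ⟨htope, by rw [hlastval, h]⟩, hrho⟩
  have hcup : ρ '' A ∪ ρ '' B = Topes D := by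
    apply Set.Subset.antisymm
    · rintro t (⟨s, ⟨hs, -⟩, rfl⟩ | ⟨s, ⟨hs, -⟩, rfl⟩) <;> exact restrict_mem_topes hs
    · rintro t ⟨⟨c, rfl⟩, hz⟩
      have hzero_iff : ∀ j, (⟪c, D j⟫ = 0 ↔ D j = 0) := by
        intro j
        have := Set.ext_iff.mp hz j
        simpa [zsgn, sgnv, sign_eq_zero_iff] using this
      obtain ⟨c', hc', hcl⟩ : ∃ c' : E, sgnv D c' = sgnv D c ∧ ⟪c', wl⟫ ≠ 0 := by
        by_cases hcw : ⟪c, wl⟫ = 0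
        · obtain ⟨δ, hδpos, hδ⟩ := perturb D c wl
          refine ⟨c + δ • wl, ?_, ?_⟩
          · funext j
            by_cases hj : ⟪c, D j⟫ = 0
            · have hDj : D j = 0 := (hzero_iff j).mp hj
              simp [sgnv, hDj]
            · exact hδ δ (by rw [abs_of_pos hδpos]) j hj
          · rw [inner_add_left, real_inner_smul_left, hcw, zero_add]
            positivity
        · exact ⟨c, rfl, hcw⟩
      have hrest : sgnv D c' ∈ Topes D := by
        refine ⟨⟨c', rfl⟩, ?_⟩
        rw [hc']
        exact hz
      have := hmemAB c' hrest hcl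
      rwa [hc'] at this
  have hcap : ρ '' A ∩ ρ '' B = Topes C := by
    apply Set.Subset.antisymm
    · rintro t ⟨⟨sp, ⟨hspT, hsp1⟩, hrp⟩, ⟨sm, ⟨hsmT, hsm1⟩, hrm⟩⟩
      obtain ⟨⟨cp, hcp⟩, hzp⟩ := hspT
      obtain ⟨⟨cm, hcm⟩, hzm⟩ := hsmT
      have hp : 0 < ⟪cp, wl⟫ := by
        apply sign_eq_one_iff.mp
        rw [show SignType.sign ⟪cp, wl⟫ = sgnv W cp (Fin.last n) from rfl, hcp]
        exact hsp1
      have hq : ⟪cm, wl⟫ < 0 := by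
        apply sign_eq_neg_one_iff.mp
        rw [show SignType.sign ⟪cm, wl⟫ = sgnv W cm (Fin.last n) from rfl, hcm]
        exact hsm1
      set a : ℝ := -⟪cm, wl⟫ with ha'
      set b : ℝ := ⟪cp, wl⟫ with hb'
      have hapos : 0 < a := by rw [ha']; linarith
      have hbpos : 0 < b := by rw [hb']; exact hp
      set c₀ : E := a • cp + b • cm with hc₀
      have hinner0 : ⟪c₀, wl⟫ = 0 := by
        rw [hc₀, inner_add_left, real_inner_smul_left, real_inner_smul_left, ha', hb']
        ring
      have hsigns : ∀ j, SignType.sign ⟪c₀, D j⟫ = t j := by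
        intro j
        have h1 : SignType.sign ⟪cp, D j⟫ = t j := by
          rw [show SignType.sign ⟪cp, D j⟫ = sgnv W cp (Fin.castSucc j) from rfl, hcp, ← hrp]
          rfl
        have h2 : SignType.sign ⟪cm, D j⟫ = t j := by
          rw [show SignType.sign ⟪cm, D j⟫ = sgnv W cm (Fin.castSucc j) from rfl, hcm, ← hrm]
          rfl
        rw [hc₀, inner_add_left, real_inner_smul_left, real_inner_smul_left]
        rw [← h1]
        exact sign_combo hapos hbpos (h1.trans h2.symm)
      have htD : t ∈ Topes D := by
        have hspT' : sp ∈ Topes W := ⟨⟨cp, hcp⟩, hzp⟩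
        have := restrict_mem_topes hspT'
        rwa [show sp ∘ Fin.castSucc = t from hrp] at this
      refine ⟨⟨c₀, ?_⟩, ?_⟩
      · funext j
        rw [show sgnv C c₀ j = SignType.sign ⟪c₀, C j⟫ from rfl, hC]
        rw [inner_prjL wl c₀ (D j) hinner0]
        exact hsigns j
      · ext j
        have := Set.ext_iff.mp htD.2 j
        simp only [zsgn, Set.mem_setOf_eq] at this ⊢
        rw [this, ← hlps j]
    · rintro t ⟨⟨c, rfl⟩, hz⟩
      set c₀ : E := prjL wl c with hc₀
      have hsgn : ∀ j, ⟪c₀, D j⟫ = ⟪c, C j⟫ := fun j => prjL_symm wl c (D j)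
      have h0' : ⟪c₀, wl⟫ = 0 := inner_prjL_self wl c h0
      have hsgnvD : sgnv D c₀ = sgnv C c := by
        funext j
        rw [show sgnv D c₀ j = SignType.sign ⟪c₀, D j⟫ from rfl, hsgn j]
        rfl
      have hzero_iff : ∀ j, (⟪c₀, D j⟫ = 0 ↔ D j = 0) := by
        intro j
        rw [hsgn j, ← hlps j]
        have := Set.ext_iff.mp hz j
        simpa [zsgn, sgnv, sign_eq_zero_iff] using this
      have htD : sgnv C c ∈ Topes D := by
        refine ⟨⟨c₀, hsgnvD⟩, ?_⟩
        ext j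
        have := Set.ext_iff.mp hz j
        simp only [zsgn, Set.mem_setOf_eq] at this ⊢
        rw [this, ← hlps j]
      obtain ⟨δ, hδpos, hδ⟩ := perturb D c₀ wl
      have hpert : ∀ ε : ℝ, |ε| ≤ δ → sgnv D (c₀ + ε • wl) = sgnv C c := by
        intro ε hε
        rw [← hsgnvD]
        funext j
        by_cases hj : ⟪c₀, D j⟫ = 0
        · have hDj : D j = 0 := (hzero_iff j).mp hj
          simp [sgnv, hDj]
        · exact hδ ε hε j hj
      have hlastp : ⟪c₀ + δ • wl, wl⟫ = δ * ⟪wl, wl⟫ := by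
        rw [inner_add_left, real_inner_smul_left, h0', zero_add]
      have hlastm : ⟪c₀ + (-δ) • wl, wl⟫ = -δ * ⟪wl, wl⟫ := by
        rw [inner_add_left, real_inner_smul_left, h0', zero_add]
      have habs : |δ| ≤ δ := le_of_eq (abs_of_pos hδpos)
      have habsm : |(-δ)| ≤ δ := by rw [abs_neg]; exact habs
      have hrestp : sgnv D (c₀ + δ • wl) ∈ Topes D := by rw [hpert δ habs]; exact htD
      have hrestm : sgnv D (c₀ + (-δ) • wl) ∈ Topes D := by rw [hpert (-δ) habsm]; exact htD
      have hclp : ⟪c₀ + δ • wl, wl⟫ ≠ 0 := by rw [hlastp]; positivity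
      have hclm : ⟪c₀ + (-δ) • wl, wl⟫ ≠ 0 := by
        rw [hlastm]
        have : 0 < δ * ⟪wl, wl⟫ := by positivity
        intro hcon
        nlinarith
      have htpp : sgnv W (c₀ + δ • wl) ∈ Topes W := mem_topes_of W _ hrestp h0 hclp
      have htpm : sgnv W (c₀ + (-δ) • wl) ∈ Topes W := mem_topes_of W _ hrestm h0 hclm
      constructor
      · refine ⟨sgnv W (c₀ + δ • wl), ⟨htpp, ?_⟩, ?_⟩
        · rw [show sgnv W (c₀ + δ • wl) (Fin.last n) = SignType.sign ⟪c₀ + δ • wl, wl⟫ from rfl,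
            hlastp]
          exact sign_pos (by positivity)
        · rw [show ρ (sgnv W (c₀ + δ • wl)) = sgnv D (c₀ + δ • wl) from rfl, hpert δ habs]
      · refine ⟨sgnv W (c₀ + (-δ) • wl), ⟨htpm, ?_⟩, ?_⟩
        · rw [show sgnv W (c₀ + (-δ) • wl) (Fin.last n) = SignType.sign ⟪c₀ + (-δ) • wl, wl⟫
            from rfl, hlastm]
          apply sign_neg
          have : 0 < δ * ⟪wl, wl⟫ := by positivity
          nlinarith
        · rw [show ρ (sgnv W (c₀ + (-δ) • wl)) = sgnv D (c₀ + (-δ) • wl) from rfl,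
            hpert (-δ) habsm]
  calc (Topes W).ncard = (A ∪ B).ncard := by rw [hTunion]
    _ = A.ncard + B.ncard := Set.ncard_union_eq hdisj (Set.toFinite _) (Set.toFinite _)
    _ = (ρ '' A).ncard + (ρ '' B).ncard := by
        rw [Set.ncard_image_of_injOn hinjA, Set.ncard_image_of_injOn hinjB]
    _ = (ρ '' A ∪ ρ '' B).ncard + (ρ '' A ∩ ρ '' B).ncard :=
        (Set.ncard_union_add_ncard_inter _ _ (Set.toFinite _) (Set.toFinite _)).symm
    _ = _ := by rw [hcup, hcap]

lemma rk_del (W : Fin (n+1) → E) (S : Set (Fin n)) :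
    rk (W ∘ Fin.castSucc) S = rk W (Fin.castSucc '' S) := by
  unfold rk
  rw [Set.image_comp]

lemma rk_ctr (W : Fin (n+1) → E) (h0 : W (Fin.last n) ≠ 0) (S : Set (Fin n)) :
    rk (fun j => prjL (W (Fin.last n)) ((W ∘ Fin.castSucc) j)) S + 1
      = rk W (insert (Fin.last n) (Fin.castSucc '' S)) := by
  unfold rk
  have himg : (fun j => prjL (W (Fin.last n)) ((W ∘ Fin.castSucc) j)) '' S
      = prjL (W (Fin.last n)) '' (W '' (Fin.castSucc '' S)) := by
    rw [← Set.image_comp, ← Set.image_comp]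
    rfl
  rw [himg]
  have hspan : Submodule.span ℝ (W '' insert (Fin.last n) (Fin.castSucc '' S))
      = Submodule.span ℝ (W '' (Fin.castSucc '' S)) ⊔ Submodule.span ℝ {W (Fin.last n)} := by
    rw [Set.image_insert_eq, Submodule.span_insert]
    exact sup_comm _ _
  rw [hspan]
  have h := finrank_span_image_proj (prjL (W (Fin.last n)))
    (Submodule.span ℝ {W (Fin.last n)}) (ker_prjL _ h0) (W '' (Fin.castSucc '' S))
  rw [finrank_span_singleton h0] at h
  exact h

lemma parallel_of_rk {x y : E} (hx : x ≠ 0) (hy : y ≠ 0)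
    (h : Module.finrank ℝ (Submodule.span ℝ ({x, y} : Set E)) = 1) :
    ∃ lam : ℝ, lam ≠ 0 ∧ y = lam • x := by
  have hle : Submodule.span ℝ {x} ≤ Submodule.span ℝ ({x, y} : Set E) :=
    Submodule.span_mono (by simp)
  have heq : Submodule.span ℝ {x} = Submodule.span ℝ ({x, y} : Set E) := by
    apply Submodule.eq_of_le_of_finrank_le hle
    rw [h, finrank_span_singleton hx]
  have hmem : y ∈ Submodule.span ℝ {x} := by
    rw [heq]
    exact Submodule.subset_span (by simp)
  obtain ⟨lam, hlam⟩ := Submodule.mem_span_singleton.mp hmem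
  refine ⟨lam, ?_, hlam.symm⟩
  intro hz
  rw [hz, zero_smul] at hlam
  exact hy hlam.symm

lemma rk_pair_one {x y : E} (hx : x ≠ 0) {lam : ℝ} (hpar : y = lam • x) :
    Module.finrank ℝ (Submodule.span ℝ ({x, y} : Set E)) = 1 := by
  have : Submodule.span ℝ ({x, y} : Set E) = Submodule.span ℝ {x} := by
    apply le_antisymm
    · rw [Submodule.span_le]
      intro z hz
      simp only [Set.mem_insert_iff, Set.mem_singleton_iff] at hz
      rcases hz with h1 | h1
      · rw [h1]
        exact Submodule.mem_span_singleton_self x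
      · rw [h1, hpar]
        exact Submodule.smul_mem _ _ (Submodule.mem_span_singleton_self x)
    · exact Submodule.span_mono (by simp)
  rw [this, finrank_span_singleton hx]

lemma topes_zero (W : Fin 0 → E) : Topes W = Set.univ := by
  apply Set.eq_univ_of_forall
  intro s
  refine ⟨⟨0, funext fun i => i.elim0⟩, ?_⟩
  ext i
  exact i.elim0

/-- **Theorem A**: families with the same matroid have the same number of topes. -/
theorem topes_ncard_eq : ∀ {m : ℕ} (W₁ : Fin m → E) (W₂ : Fin m → F),
    (∀ S : Set (Fin m), rk W₁ S = rk W₂ S) → (Topes W₁).ncard = (Topes W₂).ncard := by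
  intro m
  induction m with
  | zero =>
    intro W₁ W₂ _
    rw [topes_zero W₁, topes_zero W₂]
  | succ n ih =>
    intro W₁ W₂ h
    by_cases h0 : W₁ (Fin.last n) = 0
    · have h0' : W₂ (Fin.last n) = 0 := by
        rw [← rk_singleton_eq_zero W₂, ← h, rk_singleton_eq_zero]
        exact h0
      rw [topes_case_zero W₁ h0, topes_case_zero W₂ h0']
      exact ih _ _ (fun S => by rw [rk_del, rk_del, h])
    · have h0' : W₂ (Fin.last n) ≠ 0 := by
        intro hc
        exact h0 (by rw [← rk_singleton_eq_zero W₁, h, rk_singleton_eq_zero]; exact hc)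
    
      by_cases hp : ∃ j : Fin n, W₁ (Fin.castSucc j) ≠ 0 ∧
          rk W₁ {Fin.castSucc j, Fin.last n} = 1
      · obtain ⟨j, hj, hr⟩ := hp
        have hj' : W₂ (Fin.castSucc j) ≠ 0 := by
          intro hc
          exact hj (by rw [← rk_singleton_eq_zero W₁, h, rk_singleton_eq_zero]; exact hc)
        have hr' : rk W₂ {Fin.castSucc j, Fin.last n} = 1 := by rw [← h]; exact hr
        have hr₁ : Module.finrank ℝ
            (Submodule.span ℝ ({W₁ (Fin.castSucc j), W₁ (Fin.last n)} : Set E)) = 1 := by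
          rw [← Set.image_pair]
          exact hr
        have hr₂ : Module.finrank ℝ
            (Submodule.span ℝ ({W₂ (Fin.castSucc j), W₂ (Fin.last n)} : Set F)) = 1 := by
          rw [← Set.image_pair]
          exact hr'
        obtain ⟨lam₁, hlam₁, hpar₁⟩ := parallel_of_rk hj h0 hr₁
        obtain ⟨lam₂, hlam₂, hpar₂⟩ := parallel_of_rk hj' h0' hr₂
        rw [topes_case_parallel W₁ j lam₁ hj hlam₁ hpar₁,
          topes_case_parallel W₂ j lam₂ hj' hlam₂ hpar₂]
        exact ih _ _ (fun S => by rw [rk_del, rk_del, h])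
      · have hp' : ¬ ∃ j : Fin n, W₂ (Fin.castSucc j) ≠ 0 ∧
            rk W₂ {Fin.castSucc j, Fin.last n} = 1 := by
          intro ⟨j, hj, hr⟩
          apply hp
          refine ⟨j, ?_, by rw [h]; exact hr⟩
          intro hc
          exact hj (by rw [← rk_singleton_eq_zero W₂, ← h, rk_singleton_eq_zero]; exact hc)
        have hg₁ : ∀ j : Fin n, (W₁ ∘ Fin.castSucc) j ∈
            Submodule.span ℝ {W₁ (Fin.last n)} → (W₁ ∘ Fin.castSucc) j = 0 := by
          intro j hmem
          by_contra hne
          obtain ⟨mu, hmu⟩ := Submodule.mem_span_singleton.mp hmem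
          apply hp
          refine ⟨j, hne, ?_⟩
          unfold rk
          rw [Set.image_pair]
          rw [show ({W₁ (Fin.castSucc j), W₁ (Fin.last n)} : Set E)
              = {W₁ (Fin.last n), W₁ (Fin.castSucc j)} from Set.pair_comm _ _]
          exact rk_pair_one h0 hmu.symm
        have hg₂ : ∀ j : Fin n, (W₂ ∘ Fin.castSucc) j ∈
            Submodule.span ℝ {W₂ (Fin.last n)} → (W₂ ∘ Fin.castSucc) j = 0 := by
          intro j hmem
          by_contra hne
          obtain ⟨mu, hmu⟩ := Submodule.mem_span_singleton.mp hmem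
          apply hp'
          refine ⟨j, hne, ?_⟩
          unfold rk
          rw [Set.image_pair]
          rw [show ({W₂ (Fin.castSucc j), W₂ (Fin.last n)} : Set F)
              = {W₂ (Fin.last n), W₂ (Fin.castSucc j)} from Set.pair_comm _ _]
          exact rk_pair_one h0' hmu.symm
        rw [topes_case_general W₁ h0 hg₁, topes_case_general W₂ h0' hg₂]
        have e1 := ih (W₁ ∘ Fin.castSucc) (W₂ ∘ Fin.castSucc)
          (fun S => by rw [rk_del, rk_del, h])
        have e2 := ih (fun j => prjL (W₁ (Fin.last n)) ((W₁ ∘ Fin.castSucc) j))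
          (fun j => prjL (W₂ (Fin.last n)) ((W₂ ∘ Fin.castSucc) j))
          (fun S => by
            have a1 := rk_ctr W₁ h0 S
            have a2 := rk_ctr W₂ h0' S
            have := h (insert (Fin.last n) (Fin.castSucc '' S))
            omega)
        omega

end ThmA

section ThmB

variable {m : ℕ}

lemma inner_eq_zero_of_span {c : E} {A : Set E} (h : ∀ a ∈ A, ⟪c, a⟫ = 0) :
    ∀ v ∈ Submodule.span ℝ A, ⟪c, v⟫ = 0 := by
  intro v hv
  induction hv using Submodule.span_induction with
  | mem x hx => exact h x hx
  | zero => exact inner_zero_right c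
  | add x y _ _ hx hy => rw [inner_add_right, hx, hy, add_zero]
  | smul a x _ hx => rw [real_inner_smul_right, hx, mul_zero]

lemma mem_orthogonal_span {c : E} {A : Set E} (h : ∀ a ∈ A, ⟪c, a⟫ = 0) :
    c ∈ (Submodule.span ℝ A)ᗮ := by
  rw [Submodule.mem_orthogonal']
  exact inner_eq_zero_of_span h

lemma mem_span_iff_rk (W : Fin m → E) (S : Set (Fin m)) (j : Fin m) :
    W j ∈ Submodule.span ℝ (W '' S) ↔ rk W (insert j S) = rk W S := by
  constructor
  · intro hmem
    unfold rk
    rw [Set.image_insert_eq]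
    have heq : Submodule.span ℝ (insert (W j) (W '' S)) = Submodule.span ℝ (W '' S) := by
      rw [Submodule.span_insert, sup_eq_right.mpr]
      rwa [Submodule.span_singleton_le_iff_mem]
    rw [heq]
  · intro hrk
    have hle : Submodule.span ℝ (W '' S) ≤ Submodule.span ℝ (W '' insert j S) :=
      Submodule.span_mono (Set.image_mono (Set.subset_insert j S))
    have heq : Submodule.span ℝ (W '' S) = Submodule.span ℝ (W '' insert j S) := by
      apply Submodule.eq_of_le_of_finrank_le hle
      exact le_of_eq hrk
    rw [heq]
    exact Submodule.subset_span (Set.mem_image_of_mem W (Set.mem_insert j S))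

lemma blk_empty (W : Fin m → E) (S : Set (Fin m)) (j : Fin m) (hj : j ∉ S)
    (hmem : W j ∈ Submodule.span ℝ (W '' S)) :
    {s | s ∈ SV W ∧ zsgn s = S} = ∅ := by
  rw [Set.eq_empty_iff_forall_notMem]
  rintro s ⟨⟨c, rfl⟩, hz⟩
  have hc : ∀ a ∈ W '' S, ⟪c, a⟫ = 0 := by
    rintro _ ⟨i, hi, rfl⟩
    have : i ∈ zsgn (sgnv W c) := by rw [hz]; exact hi
    simpa [zsgn, sgnv, sign_eq_zero_iff] using this
  have hcj : ⟪c, W j⟫ = 0 := inner_eq_zero_of_span hc _ hmem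
  have : j ∈ zsgn (sgnv W c) := by simpa [zsgn, sgnv, sign_eq_zero_iff] using hcj
  rw [hz] at this
  exact hj this

lemma blk_eq_topes (W : Fin m → E) (S : Set (Fin m))
    (hclosed : ∀ j, W j ∈ Submodule.span ℝ (W '' S) → j ∈ S) :
    {s | s ∈ SV W ∧ zsgn s = S}
      = Topes (fun i => pjK (Submodule.span ℝ (W '' S)) (W i)) := by
  set K := Submodule.span ℝ (W '' S) with hK
  have hlpseq : {i : Fin m | pjK K (W i) = 0} = S := by
    ext i
    rw [Set.mem_setOf_eq, pjK_eq_zero_iff]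
    exact ⟨fun h => hclosed i h, fun h =>
      Submodule.subset_span (Set.mem_image_of_mem W h)⟩
  apply Set.Subset.antisymm
  · rintro s ⟨⟨c, rfl⟩, hz⟩
    have hc : c ∈ Kᗮ := by
      apply mem_orthogonal_span
      rintro _ ⟨i, hi, rfl⟩
      have : i ∈ zsgn (sgnv W c) := by rw [hz]; exact hi
      simpa [zsgn, sgnv, sign_eq_zero_iff] using this
    have hsg : sgnv (fun i => pjK K (W i)) c = sgnv W c := by
      funext i
      show SignType.sign ⟪c, pjK K (W i)⟫ = SignType.sign ⟪c, W i⟫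
      rw [inner_pjK K c (W i) hc]
    refine ⟨⟨c, hsg⟩, ?_⟩
    rw [hz, ← hlpseq]
  · rintro t ⟨⟨c, rfl⟩, hz⟩
    have hsg : sgnv W (pjK K c) = sgnv (fun i => pjK K (W i)) c := by
      funext i
      show SignType.sign ⟪pjK K c, W i⟫ = SignType.sign ⟪c, pjK K (W i)⟫
      rw [pjK_symm]
    refine ⟨⟨pjK K c, hsg⟩, ?_⟩
    rw [hz, hlpseq]

lemma rk_pjK (W : Fin m → E) (S T : Set (Fin m)) :
    rk (fun i => pjK (Submodule.span ℝ (W '' S)) (W i)) T + rk W S = rk W (T ∪ S) := by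
  set K := Submodule.span ℝ (W '' S) with hK
  have himg : (fun i => pjK K (W i)) '' T = pjK K '' (W '' T) := by
    rw [← Set.image_comp]
    rfl
  unfold rk
  rw [himg, Set.image_union, Submodule.span_union]
  exact finrank_span_image_proj (pjK K) K (ker_pjK K) (W '' T)

lemma blk_ncard_eq (W₁ : Fin m → E) (W₂ : Fin m → F)
    (h : ∀ S : Set (Fin m), rk W₁ S = rk W₂ S) (S : Set (Fin m)) :
    {s | s ∈ SV W₁ ∧ zsgn s = S}.ncard = {s | s ∈ SV W₂ ∧ zsgn s = S}.ncard := by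
  by_cases hcl : ∃ j ∉ S, rk W₁ (insert j S) = rk W₁ S
  · obtain ⟨j, hj, hr⟩ := hcl
    rw [blk_empty W₁ S j hj ((mem_span_iff_rk W₁ S j).mpr hr),
      blk_empty W₂ S j hj ((mem_span_iff_rk W₂ S j).mpr (by rw [← h, ← h]; exact hr))]
  · push_neg at hcl
    have hclosed₁ : ∀ j, W₁ j ∈ Submodule.span ℝ (W₁ '' S) → j ∈ S := by
      intro j hmem
      by_contra hj
      exact hcl j hj ((mem_span_iff_rk W₁ S j).mp hmem)
    have hclosed₂ : ∀ j, W₂ j ∈ Submodule.span ℝ (W₂ '' S) → j ∈ S := by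
      intro j hmem
      by_contra hj
      exact hcl j hj (by rw [h, h]; exact (mem_span_iff_rk W₂ S j).mp hmem)
    rw [blk_eq_topes W₁ S hclosed₁, blk_eq_topes W₂ S hclosed₂]
    apply topes_ncard_eq
    intro T
    have a1 := rk_pjK W₁ S T
    have a2 := rk_pjK W₂ S T
    have b1 := h S
    have b2 := h (T ∪ S)
    omega

lemma svcount_partition (W : Fin m → E) (k : ℕ) :
    {s | s ∈ SV W ∧ rk W (zsgn s) = k}.ncard
      = ∑ S ∈ Finset.univ.filter (fun S : Set (Fin m) => rk W S = k),
          {s | s ∈ SV W ∧ zsgn s = S}.ncard := by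
  classical
  have hfin : ∀ (X : Set (Fin m → SignType)), X.Finite := fun X => Set.toFinite X
  rw [Set.ncard_eq_toFinset_card _ (hfin _)]
  have hbi : (hfin {s | s ∈ SV W ∧ rk W (zsgn s) = k}).toFinset
      = (Finset.univ.filter (fun S : Set (Fin m) => rk W S = k)).biUnion
          (fun S => (hfin {s | s ∈ SV W ∧ zsgn s = S}).toFinset) := by
    ext s
    simp only [Set.Finite.mem_toFinset, Set.mem_setOf_eq, Finset.mem_biUnion,
      Finset.mem_filter, Finset.mem_univ, true_and]
    constructor
    · rintro ⟨hs, hrk⟩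
      exact ⟨zsgn s, hrk, hs, rfl⟩
    · rintro ⟨S, hrk, hs, rfl⟩
      exact ⟨hs, hrk⟩
  rw [hbi, Finset.card_biUnion]
  · apply Finset.sum_congr rfl
    intro S _
    rw [Set.ncard_eq_toFinset_card _ (hfin _)]
  · intro S₁ _ S₂ _ hne
    rw [Function.onFun, Finset.disjoint_left]
    intro s hs1 hs2
    simp only [Set.Finite.mem_toFinset, Set.mem_setOf_eq] at hs1 hs2
    exact hne (hs1.2 ▸ hs2.2 ▸ rfl)

/-- **Theorem B**: families with the same matroid have the same number of
covectors of any given corank. -/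
theorem svcount_eq (W₁ : Fin m → E) (W₂ : Fin m → F)
    (h : ∀ S : Set (Fin m), rk W₁ S = rk W₂ S) (k : ℕ) :
    {s | s ∈ SV W₁ ∧ rk W₁ (zsgn s) = k}.ncard
      = {s | s ∈ SV W₂ ∧ rk W₂ (zsgn s) = k}.ncard := by
  rw [svcount_partition W₁ k, svcount_partition W₂ k]
  have hfilter : Finset.univ.filter (fun S : Set (Fin m) => rk W₁ S = k)
      = Finset.univ.filter (fun S : Set (Fin m) => rk W₂ S = k) := by
    apply Finset.filter_congr
    intro S _
    rw [h S]
  rw [hfilter]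
  apply Finset.sum_congr rfl
  intro S _
  exact blk_ncard_eq W₁ W₂ h S

end ThmB

section Zono

variable {m : ℕ}

/-- The zonotope generated by `W`. -/
def Zn (W : Fin m → E) : Set E := ∑ i : Fin m, segment ℝ (-W i) (W i)

/-- The sub-face of the segment `[-w,w]` selected by a sign. -/
def sgFace (w : E) (s : SignType) : Set E :=
  if s = 0 then segment ℝ (-w) w else {(s : ℝ) • w}

/-- The face of the zonotope associated to a sign vector. -/
def Phi (W : Fin m → E) (s : Fin m → SignType) : Set E := ∑ i : Fin m, sgFace (W i) (s i)

/-- The face of `C` exposed by the functional `⟪c, ·⟫`. -/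
def faceOf (C : Set E) (c : E) : Set E := {x ∈ C | ∀ y ∈ C, ⟪c, y⟫ ≤ ⟪c, x⟫}

lemma mem_segment_iff {w y : E} :
    y ∈ segment ℝ (-w) w ↔ ∃ t : ℝ, |t| ≤ 1 ∧ y = t • w := by
  constructor
  · rintro ⟨a, b, ha, hb, hab, rfl⟩
    refine ⟨b - a, ?_, ?_⟩
    · rw [abs_le]; constructor <;> linarith
    · rw [smul_neg, sub_smul]; abel
  · rintro ⟨t, ht, rfl⟩
    rw [abs_le] at ht
    refine ⟨(1 - t)/2, (1 + t)/2, by linarith, by linarith, by ring, ?_⟩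
    rw [smul_neg, ← neg_smul, ← add_smul]
    congr 1
    ring

lemma abs_sign_coe_le_one (s : SignType) : |(s : ℝ)| ≤ 1 := by
  cases s <;> norm_num

lemma sign_coe_mul_self (x : ℝ) : ((SignType.sign x : ℝ)) * x = |x| := by
  rcases lt_trichotomy x 0 with h | h | h
  · rw [sign_neg h, abs_of_neg h]; norm_num
  · rw [h, sign_zero, abs_zero, mul_zero]
  · rw [sign_pos h, abs_of_pos h]; norm_num

lemma sgFace_subset (w : E) (s : SignType) : sgFace w s ⊆ segment ℝ (-w) w := by
  unfold sgFace
  split_ifs with h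
  · exact Set.Subset.refl _
  · rw [Set.singleton_subset_iff, mem_segment_iff]
    exact ⟨(s : ℝ), abs_sign_coe_le_one s, rfl⟩

lemma sgFace_nonempty (w : E) (s : SignType) : (sgFace w s).Nonempty := by
  unfold sgFace
  split_ifs with h
  · exact ⟨-w, left_mem_segment ℝ _ _⟩
  · exact ⟨(s : ℝ) • w, rfl⟩

lemma inner_le_of_mem_segment {c w y : E} (hy : y ∈ segment ℝ (-w) w) :
    ⟪c, y⟫ ≤ |⟪c, w⟫| := by
  obtain ⟨t, ht, rfl⟩ := mem_segment_iff.mp hy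
  rw [real_inner_smul_right]
  calc t * ⟪c, w⟫ ≤ |t * ⟪c, w⟫| := le_abs_self _
    _ = |t| * |⟪c, w⟫| := abs_mul _ _
    _ ≤ 1 * |⟪c, w⟫| := mul_le_mul_of_nonneg_right ht (abs_nonneg _)
    _ = |⟪c, w⟫| := one_mul _

lemma inner_sgFace_eq {c w : E} {y : E} (hy : y ∈ sgFace w (SignType.sign ⟪c, w⟫)) :
    ⟪c, y⟫ = |⟪c, w⟫| := by
  unfold sgFace at hy
  split_ifs at hy with h
  · rw [sign_eq_zero_iff] at h
    obtain ⟨t, _, rfl⟩ := mem_segment_iff.mp hy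
    simp [real_inner_smul_right, h]
  · rw [Set.mem_singleton_iff] at hy
    subst hy
    rw [real_inner_smul_right, sign_coe_mul_self]

lemma mem_sgFace_of_eq {c w : E} {y : E} (hy : y ∈ segment ℝ (-w) w)
    (heq : ⟪c, y⟫ = |⟪c, w⟫|) : y ∈ sgFace w (SignType.sign ⟪c, w⟫) := by
  unfold sgFace
  split_ifs with h
  · exact hy
  · rw [← ne_eq, sign_ne_zero] at h
    obtain ⟨t, ht, rfl⟩ := mem_segment_iff.mp hy
    rw [real_inner_smul_right] at heq
    rw [Set.mem_singleton_iff]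
    have hxne : ⟪c, w⟫ ≠ 0 := h
    have habs : |⟪c, w⟫| = ((SignType.sign ⟪c, w⟫ : ℝ)) * ⟪c, w⟫ := (sign_coe_mul_self _).symm
    rw [habs] at heq
    have ht' : t = ((SignType.sign ⟪c, w⟫ : ℝ)) := mul_right_cancel₀ hxne heq
    rw [ht']


end Zono

end ZProof

namespace ZProof

section ZonoFace

variable {E : Type*} [NormedAddCommGroup E] [InnerProductSpace ℝ E] [FiniteDimensional ℝ E]
variable {m : ℕ}

lemma mem_Zn_iff {W : Fin m → E} {x : E} :
    x ∈ Zn W ↔ ∃ g : Fin m → E, (∀ i, g i ∈ segment ℝ (-W i) (W i)) ∧ ∑ i, g i = x := by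
  rw [Zn, Set.mem_fintype_sum]
  constructor
  · rintro ⟨g, hg, rfl⟩; exact ⟨g, hg, rfl⟩
  · rintro ⟨g, hg, rfl⟩; exact ⟨g, hg, rfl⟩

lemma mem_Phi_iff {W : Fin m → E} {s : Fin m → SignType} {x : E} :
    x ∈ Phi W s ↔ ∃ g : Fin m → E, (∀ i, g i ∈ sgFace (W i) (s i)) ∧ ∑ i, g i = x := by
  rw [Phi, Set.mem_fintype_sum]
  constructor
  · rintro ⟨g, hg, rfl⟩; exact ⟨g, hg, rfl⟩
  · rintro ⟨g, hg, rfl⟩; exact ⟨g, hg, rfl⟩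

lemma Phi_subset_Zn (W : Fin m → E) (s : Fin m → SignType) : Phi W s ⊆ Zn W := by
  intro x hx
  obtain ⟨g, hg, rfl⟩ := mem_Phi_iff.mp hx
  exact mem_Zn_iff.mpr ⟨g, fun i => sgFace_subset _ _ (hg i), rfl⟩

lemma Phi_nonempty (W : Fin m → E) (s : Fin m → SignType) : (Phi W s).Nonempty := by
  choose g hg using fun i => sgFace_nonempty (W i) (s i)
  exact ⟨∑ i, g i, mem_Phi_iff.mpr ⟨g, hg, rfl⟩⟩

lemma inner_le_M {W : Fin m → E} (c : E) {x : E} (hx : x ∈ Zn W) :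
    ⟪c, x⟫ ≤ ∑ i, |⟪c, W i⟫| := by
  obtain ⟨g, hg, rfl⟩ := mem_Zn_iff.mp hx
  rw [inner_sum]
  exact Finset.sum_le_sum (fun i _ => inner_le_of_mem_segment (hg i))

lemma inner_eq_M_of_mem_Phi {W : Fin m → E} {c : E} {x : E}
    (hx : x ∈ Phi W (sgnv W c)) : ⟪c, x⟫ = ∑ i, |⟪c, W i⟫| := by
  obtain ⟨g, hg, rfl⟩ := mem_Phi_iff.mp hx
  rw [inner_sum]
  exact Finset.sum_congr rfl (fun i _ => inner_sgFace_eq (hg i))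

lemma faceOf_eq_Phi (W : Fin m → E) (c : E) :
    faceOf (Zn W) c = Phi W (sgnv W c) := by
  apply Set.Subset.antisymm
  · rintro x ⟨hxZ, hmax⟩
    obtain ⟨x₀, hx₀⟩ := Phi_nonempty W (sgnv W c)
    have hx₀Z : x₀ ∈ Zn W := Phi_subset_Zn _ _ hx₀
    have hM : ⟪c, x⟫ = ∑ i, |⟪c, W i⟫| :=
      le_antisymm (inner_le_M c hxZ)
        ((inner_eq_M_of_mem_Phi hx₀) ▸ hmax x₀ hx₀Z)
    obtain ⟨g, hg, rfl⟩ := mem_Zn_iff.mp hxZ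
    rw [inner_sum] at hM
    have heach := (Finset.sum_eq_sum_iff_of_le
      (fun i _ => inner_le_of_mem_segment (hg i))).mp hM
    exact mem_Phi_iff.mpr ⟨g, fun i => mem_sgFace_of_eq (hg i)
      (heach i (Finset.mem_univ i)), rfl⟩
  · intro x hx
    refine ⟨Phi_subset_Zn _ _ hx, fun y hy => ?_⟩
    rw [inner_eq_M_of_mem_Phi hx]
    exact inner_le_M c hy

lemma isFaceOf_Zn_iff (W : Fin m → E) (G : Set E) :
    IsFaceOf (Zn W) G ↔ ∃ c : E, G = Phi W (sgnv W c) := by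
  constructor
  · rintro ⟨hne, hexp⟩
    obtain ⟨l, hl⟩ := hexp hne
    set c := (InnerProductSpace.toDual ℝ E).symm l with hc
    refine ⟨c, ?_⟩
    rw [← faceOf_eq_Phi, hl]
    ext x
    simp only [faceOf, Set.mem_setOf_eq]
    constructor
    · rintro ⟨hx, hmax⟩
      exact ⟨hx, fun y hy => by
        rw [show (⟪c, y⟫ = l y) from InnerProductSpace.toDual_symm_apply,
          show (⟪c, x⟫ = l x) from InnerProductSpace.toDual_symm_apply]
        exact hmax y hy⟩
    · rintro ⟨hx, hmax⟩
      exact ⟨hx, fun y hy => by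
        rw [← show (⟪c, y⟫ = l y) from InnerProductSpace.toDual_symm_apply,
          ← show (⟪c, x⟫ = l x) from InnerProductSpace.toDual_symm_apply]
        exact hmax y hy⟩
  · rintro ⟨c, rfl⟩
    refine ⟨Phi_nonempty _ _, fun _ => ⟨innerSL ℝ c, ?_⟩⟩
    rw [← faceOf_eq_Phi]
    rfl


lemma signType_cast_inj {s t : SignType} (h : (s : ℝ) = (t : ℝ)) : s = t := by
  cases s <;> cases t <;> simp only [SignType.cast] at h <;> first
    | rfl
    | norm_num at h

lemma phi_signs_aux (W : Fin m → E) (c c' : E)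
    (h : Phi W (sgnv W c') ⊆ Phi W (sgnv W c)) :
    ∀ i, (sgnv W c' i = 0 → sgnv W c i = 0) ∧
      (sgnv W c' i ≠ 0 → ⟪c, W i⟫ ≠ 0 → sgnv W c' i = sgnv W c i) := by
  set s' := sgnv W c' with hs'
  set g : Fin m → E := fun i => if s' i = 0 then (-(SignType.sign ⟪c, W i⟫ : ℝ)) • W i
    else ((s' i : ℝ)) • W i with hgdef
  have hgmem : ∀ i, g i ∈ sgFace (W i) (s' i) := by
    intro i
    by_cases hi : s' i = 0
    · have hgi : g i = (-(SignType.sign ⟪c, W i⟫ : ℝ)) • W i := by rw [hgdef]; simp only [hi, if_pos]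
      rw [hgi]
      unfold sgFace
      rw [if_pos hi, mem_segment_iff]
      exact ⟨-(SignType.sign ⟪c, W i⟫ : ℝ), by rw [abs_neg]; exact abs_sign_coe_le_one _, rfl⟩
    · have hgi : g i = ((s' i : ℝ)) • W i := by rw [hgdef]; simp only [hi, if_neg, if_false]
      rw [hgi]
      unfold sgFace
      rw [if_neg hi]
      rfl
  have hy : (∑ i, g i) ∈ Phi W s' := mem_Phi_iff.mpr ⟨g, hgmem, rfl⟩
  have hyc : ⟪c, ∑ i, g i⟫ = ∑ i, |⟪c, W i⟫| := inner_eq_M_of_mem_Phi (h hy)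
  rw [inner_sum] at hyc
  have hle : ∀ i ∈ Finset.univ, ⟪c, g i⟫ ≤ |⟪c, W i⟫| := fun i _ =>
    inner_le_of_mem_segment (sgFace_subset _ _ (hgmem i))
  have heach := (Finset.sum_eq_sum_iff_of_le hle).mp hyc
  intro i
  have hei := heach i (Finset.mem_univ i)
  constructor
  · intro hzero
    have hgi : g i = (-(SignType.sign ⟪c, W i⟫ : ℝ)) • W i := by
      rw [hgdef]; simp only [hzero, if_pos]
    rw [hgi, real_inner_smul_right, neg_mul, sign_coe_mul_self] at hei
    have habs : |⟪c, W i⟫| = 0 := by linarith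
    show SignType.sign ⟪c, W i⟫ = 0
    rw [sign_eq_zero_iff]
    exact abs_eq_zero.mp habs
  · intro hne hcne
    have hgi : g i = ((s' i : ℝ)) • W i := by
      rw [hgdef]; simp only [hne, if_neg, if_false]
    rw [hgi, real_inner_smul_right, ← sign_coe_mul_self ⟪c, W i⟫] at hei
    exact signType_cast_inj (mul_right_cancel₀ hcne hei)

lemma phi_inj (W : Fin m → E) (c c' : E)
    (h : Phi W (sgnv W c) = Phi W (sgnv W c')) : sgnv W c = sgnv W c' := by
  have h1 := phi_signs_aux W c c' (by rw [h])
  have h2 := phi_signs_aux W c' c (by rw [h])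
  funext i
  by_cases hz : sgnv W c i = 0
  · rw [hz, (h2 i).1 hz]
  · have hz' : sgnv W c' i ≠ 0 := fun hcon => hz ((h1 i).1 hcon)
    have hcne : ⟪c, W i⟫ ≠ 0 := by
      intro hcon
      exact hz (by show SignType.sign ⟪c, W i⟫ = 0; rw [hcon, sign_zero])
    exact ((h1 i).2 hz' hcne).symm


lemma vectorSpan_add (A B : Set E) (hA : A.Nonempty) (hB : B.Nonempty) :
    vectorSpan ℝ (A + B) = vectorSpan ℝ A ⊔ vectorSpan ℝ B := by
  apply le_antisymm
  · rw [vectorSpan_def, Submodule.span_le]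
    rintro v hv
    obtain ⟨x, hx, y, hy, rfl⟩ := Set.mem_vsub.mp hv
    obtain ⟨a, ha, b, hb, rfl⟩ := Set.mem_add.mp hx
    obtain ⟨a', ha', b', hb', rfl⟩ := Set.mem_add.mp hy
    have heq : (a + b) -ᵥ (a' + b') = (a -ᵥ a') + (b -ᵥ b') := by
      simp only [vsub_eq_sub]; abel
    rw [heq]
    apply Submodule.add_mem
    · exact SetLike.le_def.mp le_sup_left
        (Submodule.subset_span (Set.vsub_mem_vsub ha ha'))
    · exact SetLike.le_def.mp le_sup_right
        (Submodule.subset_span (Set.vsub_mem_vsub hb hb'))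
  · apply sup_le
    · rw [vectorSpan_def, Submodule.span_le]
      rintro v hv
      obtain ⟨a, ha, a', ha', rfl⟩ := Set.mem_vsub.mp hv
      obtain ⟨b₀, hb₀⟩ := hB
      have heq : a -ᵥ a' = (a + b₀) -ᵥ (a' + b₀) := by
        simp only [vsub_eq_sub]; abel
      rw [heq, vectorSpan_def]
      exact Submodule.subset_span
        (Set.vsub_mem_vsub (Set.add_mem_add ha hb₀) (Set.add_mem_add ha' hb₀))
    · rw [vectorSpan_def, Submodule.span_le]
      rintro v hv
      obtain ⟨b, hb, b', hb', rfl⟩ := Set.mem_vsub.mp hv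
      obtain ⟨a₀, ha₀⟩ := hA
      have heq : b -ᵥ b' = (a₀ + b) -ᵥ (a₀ + b') := by
        simp only [vsub_eq_sub]; abel
      rw [heq, vectorSpan_def]
      exact Submodule.subset_span
        (Set.vsub_mem_vsub (Set.add_mem_add ha₀ hb) (Set.add_mem_add ha₀ hb'))

lemma finsetSum_nonempty {ι : Type*} (t : Finset ι) (A : ι → Set E)
    (hA : ∀ i, (A i).Nonempty) : (∑ i ∈ t, A i).Nonempty := by
  classical
  induction t using Finset.cons_induction with
  | empty => exact ⟨0, by simp [Set.mem_zero]⟩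
  | cons a t ha ih =>
    rw [Finset.sum_cons]
    obtain ⟨x, hx⟩ := hA a
    obtain ⟨y, hy⟩ := ih
    exact ⟨x + y, Set.add_mem_add hx hy⟩

lemma vectorSpan_finsetSum {ι : Type*} (t : Finset ι) (A : ι → Set E)
    (hA : ∀ i, (A i).Nonempty) :
    vectorSpan ℝ (∑ i ∈ t, A i) = t.sup (fun i => vectorSpan ℝ (A i)) := by
  classical
  induction t using Finset.cons_induction with
  | empty =>
    rw [Finset.sum_empty, Finset.sup_empty]
    have h0 : ((0 : Set E)) = ({0} : Set E) := rfl
    rw [h0, vectorSpan_singleton]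
  | cons a t ha ih =>
    rw [Finset.sum_cons, Finset.sup_cons,
      vectorSpan_add _ _ (hA a) (finsetSum_nonempty t A hA), ih]

lemma vectorSpan_segment (w : E) :
    vectorSpan ℝ (segment ℝ (-w) w) = Submodule.span ℝ {w} := by
  apply le_antisymm
  · rw [vectorSpan_def, Submodule.span_le]
    rintro v hv
    obtain ⟨x, hx, y, hy, rfl⟩ := Set.mem_vsub.mp hv
    obtain ⟨t1, _, rfl⟩ := mem_segment_iff.mp hx
    obtain ⟨t2, _, rfl⟩ := mem_segment_iff.mp hy
    rw [vsub_eq_sub, ← sub_smul]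
    exact Submodule.smul_mem _ _ (Submodule.mem_span_singleton_self w)
  · rw [Submodule.span_singleton_le_iff_mem]
    have h2 : w -ᵥ (-w) ∈ segment ℝ (-w) w -ᵥ segment ℝ (-w) w :=
      Set.vsub_mem_vsub (right_mem_segment ℝ _ _) (left_mem_segment ℝ _ _)
    have h4 : w -ᵥ (-w) ∈ vectorSpan ℝ (segment ℝ (-w) w) := by
      rw [vectorSpan_def]
      exact Submodule.subset_span h2
    have h3 : w -ᵥ (-w) = (2:ℝ) • w := by
      rw [vsub_eq_sub, sub_neg_eq_add, two_smul]
    rw [h3] at h4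
    have h5 := Submodule.smul_mem _ ((2:ℝ)⁻¹) h4
    rwa [smul_smul, inv_mul_cancel₀ two_ne_zero, one_smul] at h5

lemma vectorSpan_Phi (W : Fin m → E) (s : Fin m → SignType) :
    vectorSpan ℝ (Phi W s) = Submodule.span ℝ (W '' zsgn s) := by
  rw [Phi, vectorSpan_finsetSum _ _ (fun i => sgFace_nonempty _ _)]
  apply le_antisymm
  · apply Finset.sup_le
    intro i _
    by_cases hi : s i = 0
    · rw [show sgFace (W i) (s i) = segment ℝ (-W i) (W i) by unfold sgFace; rw [if_pos hi],
        vectorSpan_segment, Submodule.span_singleton_le_iff_mem]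
      exact Submodule.subset_span (Set.mem_image_of_mem W hi)
    · rw [show sgFace (W i) (s i) = {((s i : ℝ)) • W i} by unfold sgFace; rw [if_neg hi],
        vectorSpan_singleton]
      exact bot_le
  · rw [Submodule.span_le]
    rintro v ⟨i, hi, rfl⟩
    have hi' : s i = 0 := hi
    have h1 : W i ∈ vectorSpan ℝ (sgFace (W i) (s i)) := by
      rw [show sgFace (W i) (s i) = segment ℝ (-W i) (W i) by unfold sgFace; rw [if_pos hi'],
        vectorSpan_segment]
      exact Submodule.mem_span_singleton_self _
    exact SetLike.le_def.mp
      (Finset.le_sup (f := fun i => vectorSpan ℝ (sgFace (W i) (s i))) (Finset.mem_univ i)) h1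

/-- The faces-of-given-dimension count of a zonotope equals the covector count. -/
lemma face_count (W : Fin m → E) (k : ℕ) :
    {G : Set E | IsFaceOf (Zn W) G ∧ sdim G = k}.ncard
      = {s | s ∈ SV W ∧ rk W (zsgn s) = k}.ncard := by
  have himg : {G : Set E | IsFaceOf (Zn W) G ∧ sdim G = k}
      = Phi W '' {s | s ∈ SV W ∧ rk W (zsgn s) = k} := by
    apply Set.Subset.antisymm
    · rintro G ⟨hface, hdim⟩
      obtain ⟨c, rfl⟩ := (isFaceOf_Zn_iff W G).mp hface
      refine ⟨sgnv W c, ⟨⟨c, rfl⟩, ?_⟩, rfl⟩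
      unfold sdim at hdim
      rw [vectorSpan_Phi] at hdim
      exact hdim
    · rintro _ ⟨s, ⟨⟨c, rfl⟩, hrk⟩, rfl⟩
      refine ⟨(isFaceOf_Zn_iff W _).mpr ⟨c, rfl⟩, ?_⟩
      show sdim _ = k
      unfold sdim
      rw [vectorSpan_Phi]
      exact hrk
  rw [himg]
  apply Set.ncard_image_of_injOn
  rintro s ⟨⟨c, rfl⟩, -⟩ t ⟨⟨c', rfl⟩, -⟩ hst
  exact phi_inj W c c' hst


lemma image_linear_Zn (f : E →ₗ[ℝ] E) (W : Fin m → E) :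
    f '' Zn W = Zn (fun i => f (W i)) := by
  ext x
  rw [mem_Zn_iff]
  constructor
  · rintro ⟨y, hy, rfl⟩
    obtain ⟨g, hg, rfl⟩ := mem_Zn_iff.mp hy
    refine ⟨fun i => f (g i), fun i => ?_, by rw [map_sum]⟩
    obtain ⟨t, ht, heq⟩ := mem_segment_iff.mp (hg i)
    exact mem_segment_iff.mpr ⟨t, ht, by show f (g i) = _; rw [heq]; exact f.map_smul _ _⟩
  · rintro ⟨g, hg, rfl⟩
    have ht : ∀ i, ∃ t : ℝ, |t| ≤ 1 ∧ g i = t • f (W i) :=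
      fun i => mem_segment_iff.mp (hg i)
    choose t htle hteq using ht
    refine ⟨∑ i, t i • W i, mem_Zn_iff.mpr ⟨fun i => t i • W i,
      fun i => mem_segment_iff.mpr ⟨t i, htle i, rfl⟩, rfl⟩, ?_⟩
    rw [map_sum]
    apply Finset.sum_congr rfl
    intro i _
    rw [hteq i]
    exact f.map_smul _ _

lemma projPerp_eq_prjL (u : E) (hu : ‖u‖ = 1) (x : E) : projPerp u x = prjL u x := by
  show x - ⟪u, x⟫ • u = x - (⟪u, x⟫ / ⟪u, u⟫) • u
  rw [real_inner_self_eq_norm_sq, hu]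
  norm_num

lemma image_projPerp_Zn (u : E) (hu : ‖u‖ = 1) (W : Fin m → E) :
    projPerp u '' Zn W = Zn (fun i => projPerp u (W i)) := by
  have h1 : projPerp u '' Zn W = prjL u '' Zn W := by
    apply Set.image_congr
    intro x _
    exact projPerp_eq_prjL u hu x
  rw [h1, image_linear_Zn]
  have h2 : (fun i => (prjL u) (W i)) = (fun i => projPerp u (W i)) := by
    funext i
    exact (projPerp_eq_prjL u hu (W i)).symm
  rw [h2]

lemma rk_projPerp (u : E) (hu : ‖u‖ = 1) (W : Fin m → E) (S : Set (Fin m))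
    (hgen : u ∈ Submodule.span ℝ (W '' S) → Submodule.span ℝ (W '' S) = ⊤) :
    rk (fun i => projPerp u (W i)) S =
      if u ∈ Submodule.span ℝ (W '' S) then Module.finrank ℝ E - 1 else rk W S := by
  have hu0 : u ≠ 0 := by
    intro h
    rw [h, norm_zero] at hu
    norm_num at hu
  have himg : (fun i => projPerp u (W i)) '' S = prjL u '' (W '' S) := by
    rw [← Set.image_comp]
    have hfun : (fun i => projPerp u (W i)) = (⇑(prjL u) ∘ W) := by
      funext i
      exact projPerp_eq_prjL u hu (W i)
    rw [hfun]
  have hkey := finrank_span_image_proj (prjL u) (Submodule.span ℝ {u})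
    (ker_prjL u hu0) (W '' S)
  rw [finrank_span_singleton hu0] at hkey
  split_ifs with hmem
  · have htop := hgen hmem
    have hsup : Submodule.span ℝ (W '' S) ⊔ Submodule.span ℝ {u} = ⊤ := by
      rw [htop]
      exact top_sup_eq _
    rw [hsup, finrank_top] at hkey
    unfold rk
    rw [himg]
    omega
  · have hinf : Submodule.span ℝ (W '' S) ⊓ Submodule.span ℝ {u} = ⊥ := by
      rw [eq_bot_iff]
      intro x hx
      rw [Submodule.mem_inf] at hx
      obtain ⟨hx1, hx2⟩ := hx
      obtain ⟨t, rfl⟩ := Submodule.mem_span_singleton.mp hx2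
      rcases eq_or_ne t 0 with rfl | htne
      · simp
      · exfalso
        apply hmem
        have hmem2 := Submodule.smul_mem _ t⁻¹ hx1
        rwa [smul_smul, inv_mul_cancel₀ htne, one_smul] at hmem2
    have hsum := Submodule.finrank_sup_add_finrank_inf_eq
      (Submodule.span ℝ (W '' S)) (Submodule.span ℝ {u})
    rw [hinf, finrank_bot, finrank_span_singleton hu0] at hsum
    unfold rk
    rw [himg]
    omega

lemma generic_of_faces {W : Fin m → E} (hspan : Submodule.span ℝ (Set.range W) = ⊤)
    {u : E} (hfaces : ∀ G, IsFaceOf (Zn W) G → G ≠ Zn W → u ∉ vectorSpan ℝ G) :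
    ∀ S : Set (Fin m), u ∈ Submodule.span ℝ (W '' S) → Submodule.span ℝ (W '' S) = ⊤ := by
  intro S hmem
  by_contra hne
  set V := Submodule.span ℝ (W '' S) with hV
  have hVbot : Vᗮ ≠ ⊥ := by
    intro h
    exact hne (by rw [← Submodule.orthogonal_orthogonal V, h, Submodule.bot_orthogonal_eq_top])
  obtain ⟨c₀, hc₀V, hc₀ne⟩ := Submodule.exists_mem_ne_zero_of_ne_bot hVbot
  have hex : ∃ i, ⟪c₀, W i⟫ ≠ 0 := by
    by_contra hall
    push_neg at hall
    have hc₀top : c₀ ∈ (Submodule.span ℝ (Set.range W))ᗮ := by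
      apply mem_orthogonal_span
      rintro _ ⟨i, rfl⟩
      exact hall i
    rw [hspan, Submodule.top_orthogonal_eq_bot] at hc₀top
    exact hc₀ne hc₀top
  obtain ⟨i₀, hi₀⟩ := hex
  have hzero_sv : (fun _ : Fin m => (0 : SignType)) = sgnv W 0 := by
    funext i
    show (0 : SignType) = SignType.sign ⟪(0 : E), W i⟫
    rw [inner_zero_left, sign_zero]
  have hzero : Phi W (sgnv W (0 : E)) = Zn W := by
    rw [← hzero_sv]
    unfold Phi Zn
    apply Finset.sum_congr rfl
    intro i _
    unfold sgFace
    rw [if_pos rfl]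
  have hGne : Phi W (sgnv W c₀) ≠ Zn W := by
    intro hcon
    rw [← hzero] at hcon
    have heq := phi_inj W c₀ 0 hcon
    have := congrFun heq i₀
    rw [← hzero_sv] at this
    exact hi₀ (sign_eq_zero_iff.mp this)
  have hface : IsFaceOf (Zn W) (Phi W (sgnv W c₀)) := (isFaceOf_Zn_iff W _).mpr ⟨c₀, rfl⟩
  apply hfaces _ hface hGne
  rw [vectorSpan_Phi]
  have hsub : S ⊆ zsgn (sgnv W c₀) := by
    intro i hi
    show SignType.sign ⟪c₀, W i⟫ = 0
    rw [sign_eq_zero_iff]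
    exact (Submodule.mem_orthogonal' V c₀).mp hc₀V _
      (Submodule.subset_span (Set.mem_image_of_mem W hi))
  exact Submodule.span_mono (Set.image_mono hsub) hmem

end ZonoFace

end ZProof

/-- Shephard.  Every zonotope (here: whose generators span `ℝ^d`)
is equiprojective. -/
theorem zonotopes_are_equiprojective {d m : ℕ} (eta : Fin m → Euc d)
    (hspan : Submodule.span ℝ (Set.range eta) = (⊤ : Submodule ℝ (Euc d)))
    (Z : Set (Euc d)) (hZ : Z = ∑ i : Fin m, segment ℝ (-eta i) (eta i)) :
    Equiprojective Z := by
  subst hZ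
  show Equiprojective (ZProof.Zn eta)
  intro u u' hu hu' hgenF hgenF' k
  have hg := ZProof.generic_of_faces hspan hgenF
  have hg' := ZProof.generic_of_faces hspan hgenF'
  rw [ZProof.image_projPerp_Zn u hu eta, ZProof.image_projPerp_Zn u' hu' eta]
  rw [ZProof.face_count, ZProof.face_count]
  apply ZProof.svcount_eq
  intro S
  rw [ZProof.rk_projPerp u hu eta S (hg S), ZProof.rk_projPerp u' hu' eta S (hg' S)]
  by_cases hmem : u ∈ Submodule.span ℝ (eta '' S)
  · rw [if_pos hmem, if_pos (by rw [hg S hmem]; exact Submodule.mem_top)]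
  · rw [if_neg hmem, if_neg ?_]
    intro hmem'
    exact hmem (by rw [hg' S hmem']; exact Submodule.mem_top)
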